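/- Let (x̂, ŷ) be the saddle point of the SCCP with weight μ > 0 and reference σ^r. Consider the RTRM+ dynamics: initialize x¹ ∈ Δ^n, y¹ ∈ Δ^m arbitrarily and cumulative regrets R_x⁰ = 0 ∈ ℝ^n, R_y⁰ = 0 ∈ ℝ^m; for t ≥ 1 set ℓ_x^t = −U y^t + μ(x^t − x^r), ℓ_y^t = Uᵀ x^t + μ(y^t − y^r), r_x^t = ⟨ℓ_x^t, x^t⟩·𝟏 − ℓ_x^t, r_y^t = ⟨ℓ_y^t, y^t⟩·𝟏 − ℓ_y^t, R_x^t = [R_x^{t−1} + r_x^t]_+, R_y^t = [R_y^{t−1} + r_y^t]_+ (componentwise positive part), and x^{t+1} = R_x^t/‖R_x^t‖₁ if ‖R_x^t‖₁ > 0 and x^{t+1} = (1/n)·𝟏 otherwise (analogously for y^{t+1}). Then there exists a constant C > 0, depending only on U, μ, σ^r and the initialization, such that for every T ≥ 1 there exists some t with 1 ≤ t ≤ T and ‖(x̂, ŷ) − (x^t, y^t)‖₂ ≤ C/√T. -/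
import Mathlib


open Finset

/-- Squared Euclidean norm of a vector. -/
noncomputable def sqnorm {k : ℕ} (v : Fin k → ℝ) : ℝ := ∑ i, (v i) ^ 2

/-- Euclidean norm of a concatenated profile vector in ℝ^(k+l). -/
noncomputable def pnorm {k l : ℕ} (v : Fin k → ℝ) (w : Fin l → ℝ) : ℝ :=
  Real.sqrt (sqnorm v + sqnorm w)

/-- Bilinear payoff xᵀUy. -/
def payoff {k l : ℕ} (U : Matrix (Fin k) (Fin l) ℝ) (x : Fin k → ℝ) (y : Fin l → ℝ) : ℝ :=
  ∑ i, ∑ j, x i * U i j * y j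

/-- Regularized SCCP objective G(x,y) = -xᵀUy + μ/2 ‖x - xʳ‖² - μ/2 ‖y - yʳ‖². -/
noncomputable def sccpObj {k l : ℕ} (U : Matrix (Fin k) (Fin l) ℝ) (μ : ℝ)
    (xr : Fin k → ℝ) (yr : Fin l → ℝ) (x : Fin k → ℝ) (y : Fin l → ℝ) : ℝ :=
  -(payoff U x y) + μ / 2 * sqnorm (x - xr) - μ / 2 * sqnorm (y - yr)

/-- (x̂, ŷ) is a saddle point of the SCCP with weight μ and reference (xr, yr). -/
def IsSaddle {k l : ℕ} (U : Matrix (Fin k) (Fin l) ℝ) (μ : ℝ)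
    (xr : Fin k → ℝ) (yr : Fin l → ℝ) (xh : Fin k → ℝ) (yh : Fin l → ℝ) : Prop :=
  xh ∈ stdSimplex ℝ (Fin k) ∧ yh ∈ stdSimplex ℝ (Fin l) ∧
  (∀ y ∈ stdSimplex ℝ (Fin l), sccpObj U μ xr yr xh y ≤ sccpObj U μ xr yr xh yh) ∧
  (∀ x ∈ stdSimplex ℝ (Fin k), sccpObj U μ xr yr xh yh ≤ sccpObj U μ xr yr x yh)

/-- (x*, y*) is a Nash equilibrium of the zero-sum game with payoff matrix U. -/
def IsNash {k l : ℕ} (U : Matrix (Fin k) (Fin l) ℝ)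
    (xs : Fin k → ℝ) (ys : Fin l → ℝ) : Prop :=
  xs ∈ stdSimplex ℝ (Fin k) ∧ ys ∈ stdSimplex ℝ (Fin l) ∧
  (∀ x ∈ stdSimplex ℝ (Fin k), payoff U x ys ≤ payoff U xs ys) ∧
  (∀ y ∈ stdSimplex ℝ (Fin l), payoff U xs ys ≤ payoff U xs y)

/-- Exploitability ε(σ) = max_{x'} x'ᵀUy - min_{y'} xᵀUy'. -/
noncomputable def exploit {k l : ℕ} (U : Matrix (Fin k) (Fin l) ℝ)
    (x : Fin k → ℝ) (y : Fin l → ℝ) : ℝ :=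
  sSup ((fun x' => payoff U x' y) '' stdSimplex ℝ (Fin k)) -
  sInf ((fun y' => payoff U x y') '' stdSimplex ℝ (Fin l))

/-- Transformed loss for the x-player: ℓ_x = -Uy + μ(x - xʳ). -/
noncomputable def lossX {k l : ℕ} (U : Matrix (Fin k) (Fin l) ℝ) (μ : ℝ)
    (xr : Fin k → ℝ) (x : Fin k → ℝ) (y : Fin l → ℝ) : Fin k → ℝ :=
  fun i => -(∑ j, U i j * y j) + μ * (x i - xr i)

/-- Transformed loss for the y-player: ℓ_y = Uᵀx + μ(y - yʳ). -/
noncomputable def lossY {k l : ℕ} (U : Matrix (Fin k) (Fin l) ℝ) (μ : ℝ)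
    (yr : Fin l → ℝ) (x : Fin k → ℝ) (y : Fin l → ℝ) : Fin l → ℝ :=
  fun j => (∑ i, U i j * x i) + μ * (y j - yr j)

/-- Immediate regret r = ⟨ℓ, p⟩·𝟏 - ℓ. -/
noncomputable def imRegret {k : ℕ} (ℓ : Fin k → ℝ) (p : Fin k → ℝ) : Fin k → ℝ :=
  fun i => (∑ i', ℓ i' * p i') - ℓ i

lemma coord_proj (z p : ℝ) (hp : 0 ≤ p) : (max z 0 - p)^2 ≤ (z - p)^2 - (min z 0)^2 := by
  rcases le_or_gt 0 z with h | h
  · rw [max_eq_left h, min_eq_right h]; nlinarith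
  · rw [max_eq_right h.le, min_eq_left h.le]
    nlinarith [mul_nonneg hp (neg_nonneg.mpr h.le)]

lemma coord_noise_pos (Rp r a e cb L2 d2 : ℝ) (hRp : 0 ≤ Rp) (hr : |r| ≤ cb)
    (hra : r = -a + e) (ha : 0 < a) (he : e^2 ≤ L2*d2) (hL2 : 0 < L2) (hd2 : 0 ≤ d2) :
    r^2 - (min (Rp + r) 0)^2 ≤ 2*cb*(Rp - max (Rp + r) 0) + (12*cb^2*L2/a^2)*d2 := by
  have hcb : 0 ≤ cb := le_trans (abs_nonneg r) hr
  have hrle : r ≤ cb := le_trans (le_abs_self r) hr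
  have hrge : -cb ≤ r := neg_le_of_neg_le (le_trans (neg_le_abs r) hr)
  by_cases hgood : e^2 ≤ a^2/4
  · have her : r ≤ -a/2 := by nlinarith [sq_nonneg (e - a/2), sq_nonneg (e + a/2)]
    have hterm : 0 ≤ (12*cb^2*L2/a^2)*d2 := by positivity
    rcases le_or_gt 0 (Rp + r) with hz | hz
    · rw [max_eq_left hz, min_eq_right hz]
      nlinarith
    · rw [max_eq_right hz.le, min_eq_left hz.le]
      nlinarith
  · push_neg at hgood
    have hd2' : a^2/4 < L2 * d2 := lt_of_lt_of_le hgood he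
    have hkey : 3*cb^2 ≤ (12*cb^2*L2/a^2)*d2 := by
      rw [div_mul_eq_mul_div, le_div_iff₀ (by positivity)]
      nlinarith
    have hmax1 : max (Rp + r) 0 ≤ Rp + cb := max_le (by linarith) (by linarith)
    have hmin : (min (Rp + r) 0)^2 ≥ 0 := sq_nonneg _
    nlinarith

lemma simplex_vi {k : ℕ} (μ : ℝ) (hμ : 0 < μ) (c b xh : Fin k → ℝ)
    (hxh : xh ∈ stdSimplex ℝ (Fin k))
    (hmin : ∀ x ∈ stdSimplex ℝ (Fin k),
      (∑ i, c i * xh i) + μ/2 * sqnorm (xh - b) ≤ (∑ i, c i * x i) + μ/2 * sqnorm (x - b)) :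
    ∀ x ∈ stdSimplex ℝ (Fin k), 0 ≤ ∑ i, (c i + μ * (xh i - b i)) * (x i - xh i) := by
  intro x hx
  by_contra hA
  push_neg at hA
  set A : ℝ := ∑ i, (c i + μ * (xh i - b i)) * (x i - xh i) with hAdef
  set V : ℝ := ∑ i, (x i - xh i)^2 with hVdef
  have hV : 0 ≤ V := Finset.sum_nonneg (fun i _ => sq_nonneg _)
  have hden : 0 < μ*V + 1 := by nlinarith
  set s : ℝ := min 1 ((-A)/(μ*V + 1)) with hsdef
  have hs0 : 0 < s := lt_min one_pos (div_pos (by linarith) hden)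
  have hs1 : s ≤ 1 := min_le_left _ _
  have hsA : s ≤ (-A)/(μ*V + 1) := min_le_right _ _
  have hsA' : s * (μ*V + 1) ≤ -A := (le_div_iff₀ hden).mp hsA
  have hmem : (fun i => xh i + s * (x i - xh i)) ∈ stdSimplex ℝ (Fin k) := by
    constructor
    · intro i
      show 0 ≤ xh i + s * (x i - xh i)
      have h1 : xh i + s * (x i - xh i) = (1 - s) * xh i + s * x i := by ring
      rw [h1]
      have h3 := hxh.1 i; have h4 := hx.1 i
      have h2 : (0:ℝ) ≤ 1 - s := by linarith
      positivity
    · show ∑ i, (xh i + s * (x i - xh i)) = 1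
      have h1 : ∑ i, (xh i + s * (x i - xh i)) = (∑ i, xh i) + s * ((∑ i, x i) - ∑ i, xh i) := by
        rw [Finset.sum_add_distrib, ← Finset.mul_sum, Finset.sum_sub_distrib]
      rw [h1, hxh.2, hx.2]; ring
  have hexp := hmin _ hmem
  have h1 : ∑ i, c i * (xh i + s * (x i - xh i))
      = (∑ i, c i * xh i) + s * ∑ i, c i * (x i - xh i) := by
    rw [Finset.mul_sum, ← Finset.sum_add_distrib]
    exact Finset.sum_congr rfl (fun i _ => by ring)
  have h2 : sqnorm ((fun i => xh i + s * (x i - xh i)) - b)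
      = sqnorm (xh - b) + s * (2 * ∑ i, (xh i - b i) * (x i - xh i)) + s^2 * V := by
    simp only [sqnorm, Pi.sub_apply, hVdef]
    rw [Finset.mul_sum, Finset.mul_sum, Finset.mul_sum, ← Finset.sum_add_distrib,
      ← Finset.sum_add_distrib]
    exact Finset.sum_congr rfl (fun i _ => by ring)
  have hAsplit : A = (∑ i, c i * (x i - xh i)) + μ * ∑ i, (xh i - b i) * (x i - xh i) := by
    rw [hAdef, Finset.mul_sum, ← Finset.sum_add_distrib]
    exact Finset.sum_congr rfl (fun i _ => by ring)
  rw [h1, h2] at hexp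
  have hfin : 0 ≤ s * A + s^2 * (μ/2) * V := by nlinarith [hexp]
  nlinarith [hfin, hsA', hs0, mul_pos hs0 hs0]

/-- one step of the RM+ potential analysis, for a single block -/
lemma block_step {k : ℕ} (R Rp r rh ph : Fin k → ℝ) (θ cb L2 d2 : ℝ)
    (hθ : 0 ≤ θ) (hph : ∀ i, 0 ≤ ph i) (hRp : ∀ i, 0 ≤ Rp i)
    (hR : ∀ i, R i = max (Rp i + r i) 0)
    (horth : ∑ i, r i * Rp i = 0)
    (hrb : ∀ i, |r i| ≤ cb)
    (hrh : ∀ i, rh i ≤ 0)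
    (he : ∀ i, (r i - rh i)^2 ≤ L2*d2)
    (hL2 : 0 < L2) (hd2 : 0 ≤ d2) :
    (∑ i, (R i - θ*ph i)^2) + 2*θ*(∑ i, r i * ph i)
      + 2*cb*(∑ i, if 0 < -rh i then R i else 0)
    ≤ (∑ i, (Rp i - θ*ph i)^2) + 2*cb*(∑ i, if 0 < -rh i then Rp i else 0)
      + (∑ i, (if 0 < -rh i then 12*cb^2*L2/(rh i)^2 else L2)) * d2 := by
  have key : ∀ i, (R i - θ*ph i)^2 + 2*cb*(if 0 < -rh i then R i else 0)
      ≤ (Rp i - θ*ph i)^2 + 2*cb*(if 0 < -rh i then Rp i else 0)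
        + 2*(r i)*(Rp i) - 2*θ*(r i)*(ph i)
        + (if 0 < -rh i then 12*cb^2*L2/(rh i)^2 else L2) * d2 := by
    intro i
    have hproj : (R i - θ*ph i)^2 ≤ (Rp i + r i - θ*ph i)^2 - (min (Rp i + r i) 0)^2 := by
      rw [hR i]; exact coord_proj _ _ (mul_nonneg hθ (hph i))
    have hexp : (Rp i + r i - θ*ph i)^2
        = (Rp i - θ*ph i)^2 + 2*(r i)*(Rp i) - 2*θ*(r i)*(ph i) + (r i)^2 := by ring
    by_cases hi : 0 < -rh i
    · simp only [if_pos hi]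
      have hnoise := coord_noise_pos (Rp i) (r i) (-rh i) (r i - rh i) cb L2 d2
        (hRp i) (hrb i) (by ring) hi (he i) hL2 hd2
      rw [← hR i] at hnoise
      have hsq : (-rh i)^2 = (rh i)^2 := by ring
      rw [hsq] at hnoise
      nlinarith [hproj, hnoise]
    · simp only [if_neg hi]
      have hrh0 : rh i = 0 := le_antisymm (hrh i) (by simpa using not_lt.mp hi)
      have hnoise : (r i)^2 ≤ L2 * d2 := by
        have := he i; rw [hrh0] at this; simpa using this
      nlinarith [hproj, sq_nonneg (min (Rp i + r i) 0)]
  calc (∑ i, (R i - θ*ph i)^2) + 2*θ*(∑ i, r i * ph i)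
        + 2*cb*(∑ i, if 0 < -rh i then R i else 0)
      = ∑ i, ((R i - θ*ph i)^2 + 2*cb*(if 0 < -rh i then R i else 0) + 2*θ*(r i * ph i)) := by
        rw [Finset.sum_add_distrib, Finset.sum_add_distrib, Finset.mul_sum, Finset.mul_sum]
        ring
    _ ≤ ∑ i, ((Rp i - θ*ph i)^2 + 2*cb*(if 0 < -rh i then Rp i else 0)
          + 2*(r i * Rp i)
          + (if 0 < -rh i then 12*cb^2*L2/(rh i)^2 else L2) * d2) := by
        apply Finset.sum_le_sum
        intro i _
        have := key i
        linarith
    _ = (∑ i, (Rp i - θ*ph i)^2) + 2*cb*(∑ i, if 0 < -rh i then Rp i else 0)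
        + 2*(∑ i, r i * Rp i)
        + (∑ i, (if 0 < -rh i then 12*cb^2*L2/(rh i)^2 else L2)) * d2 := by
        rw [Finset.sum_add_distrib, Finset.sum_add_distrib, Finset.sum_add_distrib,
          Finset.mul_sum, Finset.mul_sum, Finset.sum_mul]
    _ = _ := by rw [horth]; ring


set_option maxHeartbeats 4000000

lemma imRegret_dot_self {k : ℕ} (ℓ p : Fin k → ℝ) (hp : ∑ i, p i = 1) :
    ∑ i, imRegret ℓ p i * p i = 0 := by
  simp only [imRegret, sub_mul]
  rw [Finset.sum_sub_distrib, ← Finset.mul_sum, hp, mul_one, sub_self]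

lemma imRegret_dot {k : ℕ} (ℓ p q : Fin k → ℝ) (hp : ∑ i, p i = 1) (hq : ∑ i, q i = 1) :
    ∑ i, imRegret ℓ p i * q i = ∑ i, ℓ i * (p i - q i) := by
  simp only [imRegret, sub_mul, mul_sub]
  rw [Finset.sum_sub_distrib, Finset.sum_sub_distrib, ← Finset.mul_sum, hq, mul_one]

lemma abs_dot_le {k : ℕ} (ℓ p : Fin k → ℝ) (cl : ℝ) (hpnn : ∀ i, 0 ≤ p i)
    (hp1 : ∑ i, p i = 1) (hl : ∀ i, |ℓ i| ≤ cl) : |∑ i, ℓ i * p i| ≤ cl := by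
  calc |∑ i, ℓ i * p i| ≤ ∑ i, |ℓ i * p i| := Finset.abs_sum_le_sum_abs _ _
    _ = ∑ i, |ℓ i| * p i := by
        exact Finset.sum_congr rfl (fun i _ => by rw [abs_mul, abs_of_nonneg (hpnn i)])
    _ ≤ ∑ i, cl * p i := Finset.sum_le_sum (fun i _ => mul_le_mul_of_nonneg_right (hl i) (hpnn i))
    _ = cl := by rw [← Finset.mul_sum, hp1, mul_one]

lemma imRegret_bound {k : ℕ} (ℓ p : Fin k → ℝ) (cl : ℝ) (hpnn : ∀ i, 0 ≤ p i)
    (hp1 : ∑ i, p i = 1) (hl : ∀ i, |ℓ i| ≤ cl) : ∀ i, |imRegret ℓ p i| ≤ 2 * cl := by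
  intro i
  have h1 := abs_dot_le ℓ p cl hpnn hp1 hl
  have h2 := hl i
  have := abs_sub (∑ i', ℓ i' * p i') (ℓ i)
  calc |imRegret ℓ p i| = |(∑ i', ℓ i' * p i') - ℓ i| := rfl
    _ ≤ |∑ i', ℓ i' * p i'| + |ℓ i| := abs_sub _ _
    _ ≤ 2 * cl := by linarith

lemma imRegret_diff_bound {k : ℕ} (ℓ ℓh p ph : Fin k → ℝ) (B cl : ℝ)
    (hld : ∀ i, |ℓ i - ℓh i| ≤ B) (hlh : ∀ i, |ℓh i| ≤ cl)
    (hpnn : ∀ i, 0 ≤ p i) (hp1 : ∑ i, p i = 1) :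
    ∀ i, |imRegret ℓ p i - imRegret ℓh ph i| ≤ 2 * B + cl * ∑ i', |p i' - ph i'| := by
  intro i
  have hsplit : (∑ i', (ℓ i' - ℓh i') * p i') + ∑ i', ℓh i' * (p i' - ph i')
      = (∑ i', ℓ i' * p i') - ∑ i', ℓh i' * ph i' := by
    rw [← Finset.sum_add_distrib, ← Finset.sum_sub_distrib]
    exact Finset.sum_congr rfl (fun i' _ => by ring)
  have h1 : imRegret ℓ p i - imRegret ℓh ph i
      = ((∑ i', (ℓ i' - ℓh i') * p i') + ∑ i', ℓh i' * (p i' - ph i')) - (ℓ i - ℓh i) := by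
    rw [hsplit]; simp only [imRegret]; ring
  have h2 : |∑ i', (ℓ i' - ℓh i') * p i'| ≤ B :=
    abs_dot_le _ p B hpnn hp1 hld
  have h3 : |∑ i', ℓh i' * (p i' - ph i')| ≤ cl * ∑ i', |p i' - ph i'| := by
    calc |∑ i', ℓh i' * (p i' - ph i')| ≤ ∑ i', |ℓh i' * (p i' - ph i')| :=
          Finset.abs_sum_le_sum_abs _ _
      _ = ∑ i', |ℓh i'| * |p i' - ph i'| := by
          exact Finset.sum_congr rfl (fun i' _ => abs_mul _ _)
      _ ≤ ∑ i', cl * |p i' - ph i'| :=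
          Finset.sum_le_sum (fun i' _ => mul_le_mul_of_nonneg_right (hlh i') (abs_nonneg _))
      _ = cl * ∑ i', |p i' - ph i'| := (Finset.mul_sum _ _ _).symm
  have h4 := hld i
  calc |imRegret ℓ p i - imRegret ℓh ph i|
      ≤ |(∑ i', (ℓ i' - ℓh i') * p i') + ∑ i', ℓh i' * (p i' - ph i')| + |ℓ i - ℓh i| := by
        rw [h1]; exact abs_sub _ _
    _ ≤ (|∑ i', (ℓ i' - ℓh i') * p i'| + |∑ i', ℓh i' * (p i' - ph i')|) + |ℓ i - ℓh i| := by
        have := abs_add_le (∑ i', (ℓ i' - ℓh i') * p i') (∑ i', ℓh i' * (p i' - ph i'))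
        linarith
    _ ≤ 2 * B + cl * ∑ i', |p i' - ph i'| := by linarith

lemma simplex_coord_le_one {k : ℕ} (p : Fin k → ℝ) (hp : p ∈ stdSimplex ℝ (Fin k)) :
    ∀ i, p i ≤ 1 := by
  intro i
  have := Finset.single_le_sum (f := p) (fun j _ => hp.1 j) (Finset.mem_univ i)
  rw [hp.2] at this; exact this

lemma simplex_sum_sq_le_one {k : ℕ} (p : Fin k → ℝ) (hp : p ∈ stdSimplex ℝ (Fin k)) :
    ∑ i, (p i)^2 ≤ 1 := by
  calc ∑ i, (p i)^2 ≤ ∑ i, p i := by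
        apply Finset.sum_le_sum
        intro i _
        nlinarith [hp.1 i, simplex_coord_le_one p hp i]
    _ = 1 := hp.2

/-- Best-iterate convergence of RTRM+ in an SCCP. -/
theorem rtrm_plus_best_iterate
    {n m : ℕ} (hn : 0 < n) (hm : 0 < m)
    (U : Matrix (Fin n) (Fin m) ℝ) (μ : ℝ) (hμ : 0 < μ)
    (xr : Fin n → ℝ) (yr : Fin m → ℝ)
    (hxr : xr ∈ stdSimplex ℝ (Fin n)) (hyr : yr ∈ stdSimplex ℝ (Fin m))
    (xh : Fin n → ℝ) (yh : Fin m → ℝ)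
    (hsad : IsSaddle U μ xr yr xh yh)
    (x : ℕ → Fin n → ℝ) (y : ℕ → Fin m → ℝ)
    (Rx : ℕ → Fin n → ℝ) (Ry : ℕ → Fin m → ℝ)
    (hx1 : x 1 ∈ stdSimplex ℝ (Fin n)) (hy1 : y 1 ∈ stdSimplex ℝ (Fin m))
    (hRx0 : Rx 0 = 0) (hRy0 : Ry 0 = 0)
    (hRx : ∀ t : ℕ, 1 ≤ t →
      Rx t = fun i => max (Rx (t - 1) i + imRegret (lossX U μ xr (x t) (y t)) (x t) i) 0)
    (hRy : ∀ t : ℕ, 1 ≤ t →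
      Ry t = fun j => max (Ry (t - 1) j + imRegret (lossY U μ yr (x t) (y t)) (y t) j) 0)
    (hxu : ∀ t : ℕ, 1 ≤ t →
      x (t + 1) = if 0 < ∑ i, |Rx t i| then (fun i => Rx t i / ∑ i', |Rx t i'|)
        else fun _ => 1 / (n : ℝ))
    (hyu : ∀ t : ℕ, 1 ≤ t →
      y (t + 1) = if 0 < ∑ j, |Ry t j| then (fun j => Ry t j / ∑ j', |Ry t j'|)
        else fun _ => 1 / (m : ℝ)) :
    ∃ C : ℝ, 0 < C ∧ ∀ T : ℕ, 1 ≤ T → ∃ t : ℕ, 1 ≤ t ∧ t ≤ T ∧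
      pnorm (xh - x t) (yh - y t) ≤ C / Real.sqrt T := by

  obtain ⟨hxhm, hyhm, hsadY, hsadX⟩ := hsad
  have hn' : (0:ℝ) < n := by exact_mod_cast hn
  have hm' : (0:ℝ) < m := by exact_mod_cast hm
  -- nonnegativity of cumulative regrets
  have hRxnn : ∀ t i, 0 ≤ Rx t i := by
    intro t i
    rcases Nat.eq_zero_or_pos t with h | h
    · subst h; simp [hRx0]
    · rw [hRx t h]; exact le_max_right _ _
  have hRynn : ∀ t j, 0 ≤ Ry t j := by
    intro t j
    rcases Nat.eq_zero_or_pos t with h | h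
    · subst h; simp [hRy0]
    · rw [hRy t h]; exact le_max_right _ _
  -- iterates remain in the simplex
  have hxm : ∀ t, 1 ≤ t → x t ∈ stdSimplex ℝ (Fin n) := by
    intro t ht
    rcases t with _ | t0
    · omega
    rcases t0 with _ | s
    · exact hx1
    · have hs : 1 ≤ s + 1 := by omega
      rw [hxu (s+1) hs]
      by_cases hQ : 0 < ∑ i, |Rx (s+1) i|
      · rw [if_pos hQ]
        have hQeq : ∑ i, |Rx (s+1) i| = ∑ i, Rx (s+1) i :=
          Finset.sum_congr rfl (fun i _ => abs_of_nonneg (hRxnn _ i))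
        refine ⟨fun i => div_nonneg (hRxnn _ i) (le_of_lt hQ), ?_⟩
        show (∑ i, Rx (s+1) i / ∑ i', |Rx (s+1) i'|) = 1
        rw [← Finset.sum_div, ← hQeq, div_self (ne_of_gt hQ)]
      · rw [if_neg hQ]
        refine ⟨fun i => by positivity, ?_⟩
        show (∑ _i : Fin n, 1 / (n:ℝ)) = 1
        rw [Finset.sum_const, Finset.card_univ, Fintype.card_fin, nsmul_eq_mul]
        field_simp
  have hym : ∀ t, 1 ≤ t → y t ∈ stdSimplex ℝ (Fin m) := by
    intro t ht
    rcases t with _ | t0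
    · omega
    rcases t0 with _ | s
    · exact hy1
    · have hs : 1 ≤ s + 1 := by omega
      rw [hyu (s+1) hs]
      by_cases hQ : 0 < ∑ j, |Ry (s+1) j|
      · rw [if_pos hQ]
        have hQeq : ∑ j, |Ry (s+1) j| = ∑ j, Ry (s+1) j :=
          Finset.sum_congr rfl (fun j _ => abs_of_nonneg (hRynn _ j))
        refine ⟨fun j => div_nonneg (hRynn _ j) (le_of_lt hQ), ?_⟩
        show (∑ j, Ry (s+1) j / ∑ j', |Ry (s+1) j'|) = 1
        rw [← Finset.sum_div, ← hQeq, div_self (ne_of_gt hQ)]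
      · rw [if_neg hQ]
        refine ⟨fun j => by positivity, ?_⟩
        show (∑ _j : Fin m, 1 / (m:ℝ)) = 1
        rw [Finset.sum_const, Finset.card_univ, Fintype.card_fin, nsmul_eq_mul]
        field_simp
  -- orthogonality of the immediate regret with the previous cumulative regret
  have horthx : ∀ t, 1 ≤ t →
      ∑ i, imRegret (lossX U μ xr (x t) (y t)) (x t) i * Rx (t-1) i = 0 := by
    intro t ht
    rcases t with _ | t0
    · omega
    rcases t0 with _ | s
    · simp [hRx0]
    · have hs : 1 ≤ s + 1 := by omega
      have hsum1 : ∑ i, x (s+1+1) i = 1 := (hxm (s+1+1) (by omega)).2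
      by_cases hQ : 0 < ∑ i, |Rx (s+1) i|
      · have hxe : x ((s+1)+1) = fun i => Rx (s+1) i / ∑ i', |Rx (s+1) i'| := by
          rw [hxu (s+1) hs, if_pos hQ]
        have hRi : ∀ i, Rx (s+1) i = x (s+1+1) i * ∑ i', |Rx (s+1) i'| := by
          intro i
          rw [hxe]
          field_simp
        calc ∑ i, imRegret (lossX U μ xr (x (s+1+1)) (y (s+1+1))) (x (s+1+1)) i * Rx (s+1+1-1) i
            = (∑ i, imRegret (lossX U μ xr (x (s+1+1)) (y (s+1+1))) (x (s+1+1)) i * x (s+1+1) i)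
              * ∑ i', |Rx (s+1) i'| := by
              rw [Finset.sum_mul]
              exact Finset.sum_congr rfl (fun i _ => by rw [show s+1+1-1 = s+1 from rfl, hRi i]; ring)
          _ = 0 := by rw [imRegret_dot_self _ _ hsum1, zero_mul]
      · have hR0 : ∀ i, Rx (s+1) i = 0 := by
          intro i
          push_neg at hQ
          have h0 : ∑ i, |Rx (s+1) i| = 0 :=
            le_antisymm hQ (Finset.sum_nonneg (fun i _ => abs_nonneg _))
          have := (Finset.sum_eq_zero_iff_of_nonneg (fun i _ => abs_nonneg _)).mp h0 i
            (Finset.mem_univ i)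
          exact abs_eq_zero.mp this
        simp [hR0]
  have horthy : ∀ t, 1 ≤ t →
      ∑ j, imRegret (lossY U μ yr (x t) (y t)) (y t) j * Ry (t-1) j = 0 := by
    intro t ht
    rcases t with _ | t0
    · omega
    rcases t0 with _ | s
    · simp [hRy0]
    · have hs : 1 ≤ s + 1 := by omega
      have hsum1 : ∑ j, y (s+1+1) j = 1 := (hym (s+1+1) (by omega)).2
      by_cases hQ : 0 < ∑ j, |Ry (s+1) j|
      · have hye : y ((s+1)+1) = fun j => Ry (s+1) j / ∑ j', |Ry (s+1) j'| := by
          rw [hyu (s+1) hs, if_pos hQ]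
        have hRj : ∀ j, Ry (s+1) j = y (s+1+1) j * ∑ j', |Ry (s+1) j'| := by
          intro j
          rw [hye]
          field_simp
        calc ∑ j, imRegret (lossY U μ yr (x (s+1+1)) (y (s+1+1))) (y (s+1+1)) j * Ry (s+1+1-1) j
            = (∑ j, imRegret (lossY U μ yr (x (s+1+1)) (y (s+1+1))) (y (s+1+1)) j * y (s+1+1) j)
              * ∑ j', |Ry (s+1) j'| := by
              rw [Finset.sum_mul]
              exact Finset.sum_congr rfl (fun j _ => by rw [show s+1+1-1 = s+1 from rfl, hRj j]; ring)
          _ = 0 := by rw [imRegret_dot_self _ _ hsum1, zero_mul]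
      · have hR0 : ∀ j, Ry (s+1) j = 0 := by
          intro j
          push_neg at hQ
          have h0 : ∑ j, |Ry (s+1) j| = 0 :=
            le_antisymm hQ (Finset.sum_nonneg (fun j _ => abs_nonneg _))
          have := (Finset.sum_eq_zero_iff_of_nonneg (fun j _ => abs_nonneg _)).mp h0 j
            (Finset.mem_univ j)
          exact abs_eq_zero.mp this
        simp [hR0]
  -- constants
  set MU : ℝ := ∑ i, ∑ j, |U i j| with hMUdef
  have hMUnn : 0 ≤ MU :=
    Finset.sum_nonneg (fun i _ => Finset.sum_nonneg (fun j _ => abs_nonneg _))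
  have hrowx : ∀ i, ∑ j, |U i j| ≤ MU :=
    fun i => Finset.single_le_sum (f := fun i' => ∑ j, |U i' j|)
      (fun i' _ => Finset.sum_nonneg (fun j _ => abs_nonneg _)) (Finset.mem_univ i)
  have hcoly : ∀ j, ∑ i, |U i j| ≤ MU := by
    intro j
    calc ∑ i, |U i j| ≤ ∑ i, ∑ j', |U i j'| :=
          Finset.sum_le_sum (fun i _ =>
            Finset.single_le_sum (f := fun j' => |U i j'|) (fun j' _ => abs_nonneg _)
              (Finset.mem_univ j))
      _ = MU := rfl
  have hUb : ∀ i j, |U i j| ≤ MU := by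
    intro i j
    calc |U i j| ≤ ∑ j', |U i j'| :=
          Finset.single_le_sum (f := fun j' => |U i j'|) (fun j' _ => abs_nonneg _)
            (Finset.mem_univ j)
      _ ≤ MU := hrowx i
  set cl : ℝ := MU + μ with hcldef
  have hclpos : 0 < cl := by rw [hcldef]; linarith
  set cb : ℝ := 2 * cl with hcbdef
  have hcbpos : 0 < cb := by rw [hcbdef]; linarith
  -- loss bounds
  have hlossXb : ∀ (xv : Fin n → ℝ) (yv : Fin m → ℝ), xv ∈ stdSimplex ℝ (Fin n) →
      yv ∈ stdSimplex ℝ (Fin m) → ∀ i, |lossX U μ xr xv yv i| ≤ cl := by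
    intro xv yv hxv hyv i
    have h1 : |∑ j, U i j * yv j| ≤ MU := by
      calc |∑ j, U i j * yv j| ≤ ∑ j, |U i j * yv j| := Finset.abs_sum_le_sum_abs _ _
        _ = ∑ j, |U i j| * yv j :=
            Finset.sum_congr rfl (fun j _ => by rw [abs_mul, abs_of_nonneg (hyv.1 j)])
        _ ≤ ∑ j, |U i j| := Finset.sum_le_sum (fun j _ =>
            mul_le_of_le_one_right (abs_nonneg _) (simplex_coord_le_one yv hyv j))
        _ ≤ MU := hrowx i
    have h2 : |xv i - xr i| ≤ 1 := abs_le.mpr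
      ⟨by linarith [hxv.1 i, simplex_coord_le_one xr hxr i],
       by linarith [hxr.1 i, simplex_coord_le_one xv hxv i]⟩
    have h3 : |lossX U μ xr xv yv i| ≤ |∑ j, U i j * yv j| + μ * |xv i - xr i| := by
      have h4 := abs_add_le (-(∑ j, U i j * yv j)) (μ * (xv i - xr i))
      rw [abs_neg, abs_mul, abs_of_pos hμ] at h4
      exact h4
    rw [hcldef]
    nlinarith
  have hlossYb : ∀ (xv : Fin n → ℝ) (yv : Fin m → ℝ), xv ∈ stdSimplex ℝ (Fin n) →
      yv ∈ stdSimplex ℝ (Fin m) → ∀ j, |lossY U μ yr xv yv j| ≤ cl := by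
    intro xv yv hxv hyv j
    have h1 : |∑ i, U i j * xv i| ≤ MU := by
      calc |∑ i, U i j * xv i| ≤ ∑ i, |U i j * xv i| := Finset.abs_sum_le_sum_abs _ _
        _ = ∑ i, |U i j| * xv i :=
            Finset.sum_congr rfl (fun i _ => by rw [abs_mul, abs_of_nonneg (hxv.1 i)])
        _ ≤ ∑ i, |U i j| := Finset.sum_le_sum (fun i _ =>
            mul_le_of_le_one_right (abs_nonneg _) (simplex_coord_le_one xv hxv i))
        _ ≤ MU := hcoly j
    have h2 : |yv j - yr j| ≤ 1 := abs_le.mpr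
      ⟨by linarith [hyv.1 j, simplex_coord_le_one yr hyr j],
       by linarith [hyr.1 j, simplex_coord_le_one yv hyv j]⟩
    have h3 : |lossY U μ yr xv yv j| ≤ |∑ i, U i j * xv i| + μ * |yv j - yr j| := by
      have h4 := abs_add_le (∑ i, U i j * xv i) (μ * (yv j - yr j))
      rw [abs_mul, abs_of_pos hμ] at h4
      exact h4
    rw [hcldef]
    nlinarith
  -- payoff reshaping
  have hpayx : ∀ v : Fin n → ℝ, payoff U v yh = ∑ i, (∑ j, U i j * yh j) * v i := by
    intro v; unfold payoff
    refine Finset.sum_congr rfl (fun i _ => ?_)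
    rw [Finset.sum_mul]
    exact Finset.sum_congr rfl (fun j _ => by ring)
  have hpayy : ∀ w : Fin m → ℝ, payoff U xh w = ∑ j, (∑ i, U i j * xh i) * w j := by
    intro w; unfold payoff
    rw [Finset.sum_comm]
    refine Finset.sum_congr rfl (fun j _ => ?_)
    rw [Finset.sum_mul]
    exact Finset.sum_congr rfl (fun i _ => by ring)
  -- variational inequalities at the saddle point
  have hVIx : ∀ v ∈ stdSimplex ℝ (Fin n), 0 ≤ ∑ i, lossX U μ xr xh yh i * (v i - xh i) := by
    have hcv : ∀ u : Fin n → ℝ,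
        ∑ i, (fun i => -(∑ j, U i j * yh j)) i * u i = -payoff U u yh := by
      intro u
      rw [hpayx u, ← Finset.sum_neg_distrib]
      exact Finset.sum_congr rfl (fun i _ => by ring)
    have hvi := simplex_vi μ hμ (fun i => -(∑ j, U i j * yh j)) xr xh hxhm (by
      intro v hv
      have h := hsadX v hv
      unfold sccpObj at h
      rw [hcv v, hcv xh]
      linarith)
    intro v hv
    calc (0:ℝ) ≤ ∑ i, ((fun i => -(∑ j, U i j * yh j)) i + μ * (xh i - xr i)) * (v i - xh i) :=
          hvi v hv
      _ = ∑ i, lossX U μ xr xh yh i * (v i - xh i) :=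
          Finset.sum_congr rfl (fun i _ => by simp only [lossX])
  have hVIy : ∀ w ∈ stdSimplex ℝ (Fin m), 0 ≤ ∑ j, lossY U μ yr xh yh j * (w j - yh j) := by
    have hcw : ∀ u : Fin m → ℝ,
        ∑ j, (fun j => ∑ i, U i j * xh i) j * u j = payoff U xh u := by
      intro u
      rw [hpayy u]
    have hvi := simplex_vi μ hμ (fun j => ∑ i, U i j * xh i) yr yh hyhm (by
      intro w hw
      have h := hsadY w hw
      unfold sccpObj at h
      rw [hcw w, hcw yh]
      linarith)
    intro w hw
    calc (0:ℝ) ≤ ∑ j, ((fun j => ∑ i, U i j * xh i) j + μ * (yh j - yr j)) * (w j - yh j) :=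
          hvi w hw
      _ = ∑ j, lossY U μ yr xh yh j * (w j - yh j) :=
          Finset.sum_congr rfl (fun j _ => by simp only [lossY])
  -- the equilibrium immediate regret is componentwise nonpositive
  have hrhxnp : ∀ i, imRegret (lossX U μ xr xh yh) xh i ≤ 0 := by
    intro i
    have hei : (fun i' => if i' = i then (1:ℝ) else 0) ∈ stdSimplex ℝ (Fin n) := by
      refine ⟨fun i' => by dsimp only; split_ifs <;> norm_num, ?_⟩
      show (∑ i' : Fin n, if i' = i then (1:ℝ) else 0) = 1
      simp
    have h := hVIx _ hei
    have hsplit : ∑ i', lossX U μ xr xh yh i' * ((if i' = i then (1:ℝ) else 0) - xh i')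
        = lossX U μ xr xh yh i - ∑ i', lossX U μ xr xh yh i' * xh i' := by
      have h1 : ∀ i' ∈ Finset.univ,
          lossX U μ xr xh yh i' * ((if i' = i then (1:ℝ) else 0) - xh i')
          = (if i' = i then lossX U μ xr xh yh i' else 0) - lossX U μ xr xh yh i' * xh i' := by
        intro i' _
        split_ifs <;> ring
      rw [Finset.sum_congr rfl h1, Finset.sum_sub_distrib, Finset.sum_ite_eq' Finset.univ i]
      simp
    rw [hsplit] at h
    show (∑ i', lossX U μ xr xh yh i' * xh i') - lossX U μ xr xh yh i ≤ 0
    linarith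
  have hrhynp : ∀ j, imRegret (lossY U μ yr xh yh) yh j ≤ 0 := by
    intro j
    have hej : (fun j' => if j' = j then (1:ℝ) else 0) ∈ stdSimplex ℝ (Fin m) := by
      refine ⟨fun j' => by dsimp only; split_ifs <;> norm_num, ?_⟩
      show (∑ j' : Fin m, if j' = j then (1:ℝ) else 0) = 1
      simp
    have h := hVIy _ hej
    have hsplit : ∑ j', lossY U μ yr xh yh j' * ((if j' = j then (1:ℝ) else 0) - yh j')
        = lossY U μ yr xh yh j - ∑ j', lossY U μ yr xh yh j' * yh j' := by
      have h1 : ∀ j' ∈ Finset.univ,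
          lossY U μ yr xh yh j' * ((if j' = j then (1:ℝ) else 0) - yh j')
          = (if j' = j then lossY U μ yr xh yh j' else 0) - lossY U μ yr xh yh j' * yh j' := by
        intro j' _
        split_ifs <;> ring
      rw [Finset.sum_congr rfl h1, Finset.sum_sub_distrib, Finset.sum_ite_eq' Finset.univ j]
      simp
    rw [hsplit] at h
    show (∑ j', lossY U μ yr xh yh j' * yh j') - lossY U μ yr xh yh j ≤ 0
    linarith
  -- squared distance to the saddle point
  set d2 : ℕ → ℝ := fun t => (∑ i, (x t i - xh i)^2) + (∑ j, (y t j - yh j)^2) with hd2def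
  have hd2t : ∀ t, d2 t = (∑ i, (x t i - xh i)^2) + (∑ j, (y t j - yh j)^2) := fun t => rfl
  have hd2nn : ∀ t, 0 ≤ d2 t := fun t => add_nonneg
    (Finset.sum_nonneg fun i _ => sq_nonneg _) (Finset.sum_nonneg fun j _ => sq_nonneg _)
  -- strong monotonicity of the regularized operator
  have hmono : ∀ t, 1 ≤ t →
      μ * d2 t ≤ (∑ i, imRegret (lossX U μ xr (x t) (y t)) (x t) i * xh i)
               + (∑ j, imRegret (lossY U μ yr (x t) (y t)) (y t) j * yh j) := by
    intro t ht
    have hxt := hxm t ht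
    have hyt := hym t ht
    rw [imRegret_dot _ _ _ hxt.2 hxhm.2, imRegret_dot _ _ _ hyt.2 hyhm.2]
    have hidx : ∑ i, lossX U μ xr (x t) (y t) i * (x t i - xh i)
        = (∑ i, lossX U μ xr xh yh i * (x t i - xh i))
          + ((-(∑ i, ∑ j, U i j * (y t j - yh j) * (x t i - xh i)))
            + μ * ∑ i, (x t i - xh i)^2) := by
      rw [← Finset.sum_neg_distrib, Finset.mul_sum, ← Finset.sum_add_distrib,
        ← Finset.sum_add_distrib]
      refine Finset.sum_congr rfl (fun i _ => ?_)
      have h2 : ∑ j, U i j * (y t j - yh j) * (x t i - xh i)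
          = (∑ j, U i j * (y t j - yh j)) * (x t i - xh i) := (Finset.sum_mul _ _ _).symm
      have h1 : ∑ j, U i j * (y t j - yh j) = (∑ j, U i j * y t j) - ∑ j, U i j * yh j := by
        rw [← Finset.sum_sub_distrib]
        exact Finset.sum_congr rfl (fun j _ => by ring)
      rw [h2, h1]
      simp only [lossX]
      ring
    have hidy : ∑ j, lossY U μ yr (x t) (y t) j * (y t j - yh j)
        = (∑ j, lossY U μ yr xh yh j * (y t j - yh j))
          + ((∑ j, ∑ i, U i j * (x t i - xh i) * (y t j - yh j))
            + μ * ∑ j, (y t j - yh j)^2) := by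
      rw [Finset.mul_sum, ← Finset.sum_add_distrib, ← Finset.sum_add_distrib]
      refine Finset.sum_congr rfl (fun j _ => ?_)
      have h2 : ∑ i, U i j * (x t i - xh i) * (y t j - yh j)
          = (∑ i, U i j * (x t i - xh i)) * (y t j - yh j) := (Finset.sum_mul _ _ _).symm
      have h1 : ∑ i, U i j * (x t i - xh i) = (∑ i, U i j * x t i) - ∑ i, U i j * xh i := by
        rw [← Finset.sum_sub_distrib]
        exact Finset.sum_congr rfl (fun i _ => by ring)
      rw [h2, h1]
      simp only [lossY]
      ring
    have hcross : ∑ i, ∑ j, U i j * (y t j - yh j) * (x t i - xh i)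
        = ∑ j, ∑ i, U i j * (x t i - xh i) * (y t j - yh j) := by
      rw [Finset.sum_comm]
      exact Finset.sum_congr rfl (fun j _ => Finset.sum_congr rfl (fun i _ => by ring))
    have h3 := hVIx (x t) hxt
    have h4 := hVIy (y t) hyt
    rw [hidx, hidy, hcross, hd2t t]
    linarith
  -- Lipschitz-type bound on the immediate regrets
  set L2 : ℝ := 2*((n:ℝ)+(m:ℝ))*(3*cl)^2 + 1 with hL2def
  have hL2pos : 0 < L2 := by
    rw [hL2def]
    have : (0:ℝ) ≤ 2*((n:ℝ)+(m:ℝ))*(3*cl)^2 := by positivity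
    linarith
  have hD1sq : ∀ t, ((∑ i', |x t i' - xh i'|) + (∑ j', |y t j' - yh j'|))^2
      ≤ 2*((n:ℝ)+(m:ℝ)) * d2 t := by
    intro t
    have hA : (∑ i', |x t i' - xh i'|)^2 ≤ (n:ℝ) * ∑ i', (x t i' - xh i')^2 := by
      have := sq_sum_le_card_mul_sum_sq (s := (Finset.univ : Finset (Fin n)))
        (f := fun i' => |x t i' - xh i'|)
      simpa [sq_abs] using this
    have hB : (∑ j', |y t j' - yh j'|)^2 ≤ (m:ℝ) * ∑ j', (y t j' - yh j')^2 := by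
      have := sq_sum_le_card_mul_sum_sq (s := (Finset.univ : Finset (Fin m)))
        (f := fun j' => |y t j' - yh j'|)
      simpa [sq_abs] using this
    have hsx : 0 ≤ ∑ i', (x t i' - xh i')^2 := Finset.sum_nonneg fun _ _ => sq_nonneg _
    have hsy : 0 ≤ ∑ j', (y t j' - yh j')^2 := Finset.sum_nonneg fun _ _ => sq_nonneg _
    rw [hd2t t]
    nlinarith [sq_nonneg ((∑ i', |x t i' - xh i'|) - (∑ j', |y t j' - yh j'|))]
  have hebx : ∀ t, 1 ≤ t → ∀ i,
      (imRegret (lossX U μ xr (x t) (y t)) (x t) i - imRegret (lossX U μ xr xh yh) xh i)^2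
        ≤ L2 * d2 t := by
    intro t ht i
    have hxt := hxm t ht
    have hyt := hym t ht
    have hD1nnx : 0 ≤ ∑ i', |x t i' - xh i'| := Finset.sum_nonneg fun _ _ => abs_nonneg _
    have hD1nny : 0 ≤ ∑ j', |y t j' - yh j'| := Finset.sum_nonneg fun _ _ => abs_nonneg _
    have hld : ∀ i', |lossX U μ xr (x t) (y t) i' - lossX U μ xr xh yh i'|
        ≤ cl * ((∑ i'', |x t i'' - xh i''|) + (∑ j', |y t j' - yh j'|)) := by
      intro i'
      have hdiff : lossX U μ xr (x t) (y t) i' - lossX U μ xr xh yh i'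
          = -(∑ j, U i' j * (y t j - yh j)) + μ * (x t i' - xh i') := by
        have h1 : ∑ j, U i' j * (y t j - yh j)
            = (∑ j, U i' j * y t j) - ∑ j, U i' j * yh j := by
          rw [← Finset.sum_sub_distrib]
          exact Finset.sum_congr rfl (fun j _ => by ring)
        simp only [lossX]
        rw [h1]
        ring
      have h1 : |∑ j, U i' j * (y t j - yh j)| ≤ MU * ∑ j', |y t j' - yh j'| := by
        calc |∑ j, U i' j * (y t j - yh j)| ≤ ∑ j, |U i' j * (y t j - yh j)| :=
              Finset.abs_sum_le_sum_abs _ _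
          _ = ∑ j, |U i' j| * |y t j - yh j| :=
              Finset.sum_congr rfl (fun j _ => abs_mul _ _)
          _ ≤ ∑ j, MU * |y t j - yh j| := Finset.sum_le_sum (fun j _ =>
              mul_le_mul_of_nonneg_right (hUb i' j) (abs_nonneg _))
          _ = MU * ∑ j', |y t j' - yh j'| := (Finset.mul_sum _ _ _).symm
      have h2 : |x t i' - xh i'| ≤ ∑ i'', |x t i'' - xh i''| :=
        Finset.single_le_sum (f := fun i'' => |x t i'' - xh i''|)
          (fun _ _ => abs_nonneg _) (Finset.mem_univ i')
      have h3 : |(-(∑ j, U i' j * (y t j - yh j))) + μ * (x t i' - xh i')|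
          ≤ |∑ j, U i' j * (y t j - yh j)| + μ * |x t i' - xh i'| := by
        have h4 := abs_add_le (-(∑ j, U i' j * (y t j - yh j))) (μ * (x t i' - xh i'))
        rw [abs_neg, abs_mul, abs_of_pos hμ] at h4
        exact h4
      rw [hdiff, hcldef]
      have h5 : μ * |x t i' - xh i'| ≤ μ * ∑ i'', |x t i'' - xh i''| :=
        mul_le_mul_of_nonneg_left h2 hμ.le
      nlinarith [abs_nonneg (∑ j, U i' j * (y t j - yh j))]
    have h := imRegret_diff_bound (lossX U μ xr (x t) (y t)) (lossX U μ xr xh yh)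
      (x t) xh (cl * ((∑ i'', |x t i'' - xh i''|) + (∑ j', |y t j' - yh j'|))) cl
      hld (hlossXb xh yh hxhm hyhm) hxt.1 hxt.2 i
    have h3 : |imRegret (lossX U μ xr (x t) (y t)) (x t) i - imRegret (lossX U μ xr xh yh) xh i|
        ≤ 3*cl * ((∑ i'', |x t i'' - xh i''|) + (∑ j', |y t j' - yh j'|)) := by
      have h6 : cl * (∑ i'', |x t i'' - xh i''|)
          ≤ cl * ((∑ i'', |x t i'' - xh i''|) + (∑ j', |y t j' - yh j'|)) := by
        apply mul_le_mul_of_nonneg_left _ hclpos.le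
        linarith
      calc |imRegret (lossX U μ xr (x t) (y t)) (x t) i - imRegret (lossX U μ xr xh yh) xh i|
          ≤ 2 * (cl * ((∑ i'', |x t i'' - xh i''|) + (∑ j', |y t j' - yh j'|)))
            + cl * (∑ i'', |x t i'' - xh i''|) := h
        _ ≤ 3*cl * ((∑ i'', |x t i'' - xh i''|) + (∑ j', |y t j' - yh j'|)) := by linarith
    have h4 : (imRegret (lossX U μ xr (x t) (y t)) (x t) i
          - imRegret (lossX U μ xr xh yh) xh i)^2
        ≤ (3*cl * ((∑ i'', |x t i'' - xh i''|) + (∑ j', |y t j' - yh j'|)))^2 := by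
      rw [← sq_abs]
      exact pow_le_pow_left₀ (abs_nonneg _) h3 2
    have h5 := hD1sq t
    have h6 := hd2nn t
    calc (imRegret (lossX U μ xr (x t) (y t)) (x t) i - imRegret (lossX U μ xr xh yh) xh i)^2
        ≤ (3*cl * ((∑ i'', |x t i'' - xh i''|) + (∑ j', |y t j' - yh j'|)))^2 := h4
      _ = (3*cl)^2 * ((∑ i'', |x t i'' - xh i''|) + (∑ j', |y t j' - yh j'|))^2 := by ring
      _ ≤ (3*cl)^2 * (2*((n:ℝ)+(m:ℝ)) * d2 t) := mul_le_mul_of_nonneg_left h5 (sq_nonneg _)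
      _ = (2*((n:ℝ)+(m:ℝ))*(3*cl)^2) * d2 t := by ring
      _ ≤ L2 * d2 t := by
          apply mul_le_mul_of_nonneg_right _ h6
          rw [hL2def]; linarith
  have heby : ∀ t, 1 ≤ t → ∀ j,
      (imRegret (lossY U μ yr (x t) (y t)) (y t) j - imRegret (lossY U μ yr xh yh) yh j)^2
        ≤ L2 * d2 t := by
    intro t ht j
    have hxt := hxm t ht
    have hyt := hym t ht
    have hD1nnx : 0 ≤ ∑ i', |x t i' - xh i'| := Finset.sum_nonneg fun _ _ => abs_nonneg _
    have hD1nny : 0 ≤ ∑ j', |y t j' - yh j'| := Finset.sum_nonneg fun _ _ => abs_nonneg _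
    have hld : ∀ j', |lossY U μ yr (x t) (y t) j' - lossY U μ yr xh yh j'|
        ≤ cl * ((∑ i'', |x t i'' - xh i''|) + (∑ j'', |y t j'' - yh j''|)) := by
      intro j'
      have hdiff : lossY U μ yr (x t) (y t) j' - lossY U μ yr xh yh j'
          = (∑ i, U i j' * (x t i - xh i)) + μ * (y t j' - yh j') := by
        have h1 : ∑ i, U i j' * (x t i - xh i)
            = (∑ i, U i j' * x t i) - ∑ i, U i j' * xh i := by
          rw [← Finset.sum_sub_distrib]
          exact Finset.sum_congr rfl (fun i _ => by ring)
        simp only [lossY]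
        rw [h1]
        ring
      have h1 : |∑ i, U i j' * (x t i - xh i)| ≤ MU * ∑ i'', |x t i'' - xh i''| := by
        calc |∑ i, U i j' * (x t i - xh i)| ≤ ∑ i, |U i j' * (x t i - xh i)| :=
              Finset.abs_sum_le_sum_abs _ _
          _ = ∑ i, |U i j'| * |x t i - xh i| :=
              Finset.sum_congr rfl (fun i _ => abs_mul _ _)
          _ ≤ ∑ i, MU * |x t i - xh i| := Finset.sum_le_sum (fun i _ =>
              mul_le_mul_of_nonneg_right (hUb i j') (abs_nonneg _))
          _ = MU * ∑ i'', |x t i'' - xh i''| := (Finset.mul_sum _ _ _).symm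
      have h2 : |y t j' - yh j'| ≤ ∑ j'', |y t j'' - yh j''| :=
        Finset.single_le_sum (f := fun j'' => |y t j'' - yh j''|)
          (fun _ _ => abs_nonneg _) (Finset.mem_univ j')
      have h3 : |(∑ i, U i j' * (x t i - xh i)) + μ * (y t j' - yh j')|
          ≤ |∑ i, U i j' * (x t i - xh i)| + μ * |y t j' - yh j'| := by
        have h4 := abs_add_le (∑ i, U i j' * (x t i - xh i)) (μ * (y t j' - yh j'))
        rw [abs_mul, abs_of_pos hμ] at h4
        exact h4
      rw [hdiff, hcldef]
      have h5 : μ * |y t j' - yh j'| ≤ μ * ∑ j'', |y t j'' - yh j''| :=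
        mul_le_mul_of_nonneg_left h2 hμ.le
      nlinarith [abs_nonneg (∑ i, U i j' * (x t i - xh i))]
    have h := imRegret_diff_bound (lossY U μ yr (x t) (y t)) (lossY U μ yr xh yh)
      (y t) yh (cl * ((∑ i'', |x t i'' - xh i''|) + (∑ j'', |y t j'' - yh j''|))) cl
      hld (hlossYb xh yh hxhm hyhm) hyt.1 hyt.2 j
    have h3 : |imRegret (lossY U μ yr (x t) (y t)) (y t) j - imRegret (lossY U μ yr xh yh) yh j|
        ≤ 3*cl * ((∑ i'', |x t i'' - xh i''|) + (∑ j'', |y t j'' - yh j''|)) := by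
      have h6 : cl * (∑ j'', |y t j'' - yh j''|)
          ≤ cl * ((∑ i'', |x t i'' - xh i''|) + (∑ j'', |y t j'' - yh j''|)) := by
        apply mul_le_mul_of_nonneg_left _ hclpos.le
        linarith
      calc |imRegret (lossY U μ yr (x t) (y t)) (y t) j - imRegret (lossY U μ yr xh yh) yh j|
          ≤ 2 * (cl * ((∑ i'', |x t i'' - xh i''|) + (∑ j'', |y t j'' - yh j''|)))
            + cl * (∑ j'', |y t j'' - yh j''|) := h
        _ ≤ 3*cl * ((∑ i'', |x t i'' - xh i''|) + (∑ j'', |y t j'' - yh j''|)) := by linarith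
    have h4 : (imRegret (lossY U μ yr (x t) (y t)) (y t) j
          - imRegret (lossY U μ yr xh yh) yh j)^2
        ≤ (3*cl * ((∑ i'', |x t i'' - xh i''|) + (∑ j'', |y t j'' - yh j''|)))^2 := by
      rw [← sq_abs]
      exact pow_le_pow_left₀ (abs_nonneg _) h3 2
    have h5 := hD1sq t
    have h6 := hd2nn t
    calc (imRegret (lossY U μ yr (x t) (y t)) (y t) j - imRegret (lossY U μ yr xh yh) yh j)^2
        ≤ (3*cl * ((∑ i'', |x t i'' - xh i''|) + (∑ j'', |y t j'' - yh j''|)))^2 := h4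
      _ = (3*cl)^2 * ((∑ i'', |x t i'' - xh i''|) + (∑ j'', |y t j'' - yh j''|))^2 := by ring
      _ ≤ (3*cl)^2 * (2*((n:ℝ)+(m:ℝ)) * d2 t) := mul_le_mul_of_nonneg_left h5 (sq_nonneg _)
      _ = (2*((n:ℝ)+(m:ℝ))*(3*cl)^2) * d2 t := by ring
      _ ≤ L2 * d2 t := by
          apply mul_le_mul_of_nonneg_right _ h6
          rw [hL2def]; linarith
  -- regret bounds
  have hrbx : ∀ t, 1 ≤ t → ∀ i, |imRegret (lossX U μ xr (x t) (y t)) (x t) i| ≤ cb := by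
    intro t ht i
    rw [hcbdef]
    exact imRegret_bound _ _ cl (hxm t ht).1 (hxm t ht).2
      (hlossXb (x t) (y t) (hxm t ht) (hym t ht)) i
  have hrby : ∀ t, 1 ≤ t → ∀ j, |imRegret (lossY U μ yr (x t) (y t)) (y t) j| ≤ cb := by
    intro t ht j
    rw [hcbdef]
    exact imRegret_bound _ _ cl (hym t ht).1 (hym t ht).2
      (hlossYb (x t) (y t) (hxm t ht) (hym t ht)) j
  -- fixed equilibrium immediate regrets
  set rhx : Fin n → ℝ := imRegret (lossX U μ xr xh yh) xh with hrhxdef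
  set rhy : Fin m → ℝ := imRegret (lossY U μ yr xh yh) yh with hrhydef
  set Bx : ℝ := ∑ i, (if 0 < -rhx i then 12*cb^2*L2/(rhx i)^2 else L2) with hBxdef
  set By : ℝ := ∑ j, (if 0 < -rhy j then 12*cb^2*L2/(rhy j)^2 else L2) with hBydef
  have hBxnn : 0 ≤ Bx := by
    rw [hBxdef]
    refine Finset.sum_nonneg (fun i _ => ?_)
    split_ifs
    · exact div_nonneg (by positivity) (sq_nonneg _)
    · exact hL2pos.le
  have hBynn : 0 ≤ By := by
    rw [hBydef]
    refine Finset.sum_nonneg (fun j _ => ?_)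
    split_ifs
    · exact div_nonneg (by positivity) (sq_nonneg _)
    · exact hL2pos.le
  set BB : ℝ := Bx + By + 1 with hBBdef
  have hBB1 : 1 ≤ BB := by rw [hBBdef]; linarith
  set θ : ℝ := BB/μ with hθdef
  have hθpos : 0 < θ := by rw [hθdef]; exact div_pos (by linarith) hμ
  -- one step of the combined potential inequality
  have hstep : ∀ t, 1 ≤ t →
      ((∑ i, (Rx t i - θ*xh i)^2) + (∑ j, (Ry t j - θ*yh j)^2))
      + 2*θ*((∑ i, imRegret (lossX U μ xr (x t) (y t)) (x t) i * xh i)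
             + (∑ j, imRegret (lossY U μ yr (x t) (y t)) (y t) j * yh j))
      + 2*cb*((∑ i, if 0 < -rhx i then Rx t i else 0)
              + (∑ j, if 0 < -rhy j then Ry t j else 0))
      ≤ ((∑ i, (Rx (t-1) i - θ*xh i)^2) + (∑ j, (Ry (t-1) j - θ*yh j)^2))
        + 2*cb*((∑ i, if 0 < -rhx i then Rx (t-1) i else 0)
                + (∑ j, if 0 < -rhy j then Ry (t-1) j else 0))
        + (Bx + By) * d2 t := by
    intro t ht
    have hRtx : ∀ i, Rx t i
        = max (Rx (t-1) i + imRegret (lossX U μ xr (x t) (y t)) (x t) i) 0 := by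
      intro i; rw [hRx t ht]
    have hRty : ∀ j, Ry t j
        = max (Ry (t-1) j + imRegret (lossY U μ yr (x t) (y t)) (y t) j) 0 := by
      intro j; rw [hRy t ht]
    have hx_ := block_step (Rx t) (Rx (t-1)) (imRegret (lossX U μ xr (x t) (y t)) (x t))
      rhx xh θ cb L2 (d2 t) hθpos.le (fun i => hxhm.1 i) (fun i => hRxnn (t-1) i)
      hRtx (horthx t ht) (hrbx t ht) hrhxnp (hebx t ht) hL2pos (hd2nn t)
    have hy_ := block_step (Ry t) (Ry (t-1)) (imRegret (lossY U μ yr (x t) (y t)) (y t))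
      rhy yh θ cb L2 (d2 t) hθpos.le (fun j => hyhm.1 j) (fun j => hRynn (t-1) j)
      hRty (horthy t ht) (hrby t ht) hrhynp (heby t ht) hL2pos (hd2nn t)
    rw [← hBxdef] at hx_
    rw [← hBydef] at hy_
    nlinarith [hx_, hy_, mul_nonneg hBxnn (hd2nn t), mul_nonneg hBynn (hd2nn t)]
  -- master inequality by induction
  have hmaster : ∀ T : ℕ,
      ((∑ i, (Rx T i - θ*xh i)^2) + (∑ j, (Ry T j - θ*yh j)^2))
      + 2*θ*(∑ t ∈ Finset.Icc 1 T,
          ((∑ i, imRegret (lossX U μ xr (x t) (y t)) (x t) i * xh i)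
           + (∑ j, imRegret (lossY U μ yr (x t) (y t)) (y t) j * yh j)))
      + 2*cb*((∑ i, if 0 < -rhx i then Rx T i else 0)
              + (∑ j, if 0 < -rhy j then Ry T j else 0))
      ≤ ((∑ i, (Rx 0 i - θ*xh i)^2) + (∑ j, (Ry 0 j - θ*yh j)^2))
        + (Bx + By) * ∑ t ∈ Finset.Icc 1 T, d2 t := by
    intro T
    induction T with
    | zero =>
      rw [show Finset.Icc 1 0 = (∅ : Finset ℕ) from Finset.Icc_eq_empty (by omega)]
      simp [hRx0, hRy0]
    | succ T ih =>
      rw [Finset.sum_Icc_succ_top (by omega : 1 ≤ T+1),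
        Finset.sum_Icc_succ_top (by omega : 1 ≤ T+1)]
      have h := hstep (T+1) (by omega)
      simp only [Nat.add_sub_cancel] at h
      linarith
  -- uniform bound on the accumulated squared distances
  set K : ℝ := 2*BB^2/μ^2 with hKdef
  have hKpos : 0 < K := by
    rw [hKdef]
    have : (0:ℝ) < BB := by linarith
    positivity
  have hSbound : ∀ T : ℕ, ∑ t ∈ Finset.Icc 1 T, d2 t ≤ K := by
    intro T
    have h := hmaster T
    have hSnn : 0 ≤ ∑ t ∈ Finset.Icc 1 T, d2 t :=
      Finset.sum_nonneg (fun t _ => hd2nn t)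
    have hV0x : (∑ i, (Rx 0 i - θ*xh i)^2) ≤ θ^2 := by
      calc ∑ i, (Rx 0 i - θ*xh i)^2 = ∑ i, θ^2*(xh i)^2 := by
            refine Finset.sum_congr rfl (fun i _ => ?_)
            rw [hRx0]
            show ((0 : Fin n → ℝ) i - θ*xh i)^2 = θ^2*(xh i)^2
            simp only [Pi.zero_apply, zero_sub]
            ring
        _ = θ^2 * ∑ i, (xh i)^2 := (Finset.mul_sum _ _ _).symm
        _ ≤ θ^2 * 1 := mul_le_mul_of_nonneg_left (simplex_sum_sq_le_one xh hxhm) (sq_nonneg θ)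
        _ = θ^2 := mul_one _
    have hV0y : (∑ j, (Ry 0 j - θ*yh j)^2) ≤ θ^2 := by
      calc ∑ j, (Ry 0 j - θ*yh j)^2 = ∑ j, θ^2*(yh j)^2 := by
            refine Finset.sum_congr rfl (fun j _ => ?_)
            rw [hRy0]
            show ((0 : Fin m → ℝ) j - θ*yh j)^2 = θ^2*(yh j)^2
            simp only [Pi.zero_apply, zero_sub]
            ring
        _ = θ^2 * ∑ j, (yh j)^2 := (Finset.mul_sum _ _ _).symm
        _ ≤ θ^2 * 1 := mul_le_mul_of_nonneg_left (simplex_sum_sq_le_one yh hyhm) (sq_nonneg θ)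
        _ = θ^2 := mul_one _
    have hVTx : 0 ≤ ∑ i, (Rx T i - θ*xh i)^2 := Finset.sum_nonneg fun _ _ => sq_nonneg _
    have hVTy : 0 ≤ ∑ j, (Ry T j - θ*yh j)^2 := Finset.sum_nonneg fun _ _ => sq_nonneg _
    have hPhix : 0 ≤ ∑ i, if 0 < -rhx i then Rx T i else 0 := by
      refine Finset.sum_nonneg (fun i _ => ?_)
      split_ifs
      · exact hRxnn T i
      · exact le_refl 0
    have hPhiy : 0 ≤ ∑ j, if 0 < -rhy j then Ry T j else 0 := by
      refine Finset.sum_nonneg (fun j _ => ?_)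
      split_ifs
      · exact hRynn T j
      · exact le_refl 0
    have hG : μ * (∑ t ∈ Finset.Icc 1 T, d2 t)
        ≤ ∑ t ∈ Finset.Icc 1 T,
            ((∑ i, imRegret (lossX U μ xr (x t) (y t)) (x t) i * xh i)
             + (∑ j, imRegret (lossY U μ yr (x t) (y t)) (y t) j * yh j)) := by
      rw [Finset.mul_sum]
      exact Finset.sum_le_sum (fun t htm => hmono t (Finset.mem_Icc.mp htm).1)
    have hG2 : 2*θ*(μ * ∑ t ∈ Finset.Icc 1 T, d2 t)
        ≤ 2*θ*(∑ t ∈ Finset.Icc 1 T,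
            ((∑ i, imRegret (lossX U μ xr (x t) (y t)) (x t) i * xh i)
             + (∑ j, imRegret (lossY U μ yr (x t) (y t)) (y t) j * yh j))) :=
      mul_le_mul_of_nonneg_left hG (by linarith)
    have hθμ : θ * μ = BB := by
      rw [hθdef]
      field_simp
    have hθsq : 2*θ^2 = K := by
      rw [hKdef, hθdef, div_pow]
      ring
    -- combine : 2*BB*S ≤ 2*θ^2 + (BB-1)*S
    have hfin : 2*BB*(∑ t ∈ Finset.Icc 1 T, d2 t)
        ≤ K + (BB - 1)*(∑ t ∈ Finset.Icc 1 T, d2 t) := by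
      have e1 : 2*θ*(μ * ∑ t ∈ Finset.Icc 1 T, d2 t)
          = 2*BB*(∑ t ∈ Finset.Icc 1 T, d2 t) := by
        rw [← hθμ]; ring
      have e2 : Bx + By = BB - 1 := by rw [hBBdef]; ring
      rw [e1] at hG2
      rw [e2] at h
      have hcb2 : 0 ≤ 2*cb*((∑ i, if 0 < -rhx i then Rx T i else 0)
          + (∑ j, if 0 < -rhy j then Ry T j else 0)) := by
        apply mul_nonneg (by linarith)
        linarith
      rw [← hθsq]
      linarith
    nlinarith
  -- conclusion
  refine ⟨Real.sqrt K + 1, by positivity, ?_⟩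
  intro T hT
  have hTpos : (0:ℝ) < (T:ℝ) := by
    have : (1:ℝ) ≤ (T:ℝ) := by exact_mod_cast hT
    linarith
  have hex : ∃ t ∈ Finset.Icc 1 T, d2 t ≤ K / T := by
    by_contra hc
    push_neg at hc
    have hlt : ∑ _t ∈ Finset.Icc 1 T, (K/(T:ℝ)) < ∑ t ∈ Finset.Icc 1 T, d2 t :=
      Finset.sum_lt_sum_of_nonempty (by rw [Finset.nonempty_Icc]; omega)
        (fun t htm => hc t htm)
    rw [Finset.sum_const, Nat.card_Icc, Nat.add_sub_cancel, nsmul_eq_mul] at hlt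
    have he : (T:ℝ)*(K/(T:ℝ)) = K := by field_simp
    rw [he] at hlt
    linarith [hSbound T]
  obtain ⟨t, htm, htle⟩ := hex
  obtain ⟨ht1, ht2⟩ := Finset.mem_Icc.mp htm
  refine ⟨t, ht1, ht2, ?_⟩
  have hpn : pnorm (xh - x t) (yh - y t) = Real.sqrt (d2 t) := by
    unfold pnorm sqnorm
    congr 1
    rw [hd2t t]
    congr 1
    · exact Finset.sum_congr rfl (fun i _ => by rw [Pi.sub_apply]; ring)
    · exact Finset.sum_congr rfl (fun j _ => by rw [Pi.sub_apply]; ring)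
  rw [hpn]
  have hsT : 0 < Real.sqrt (T:ℝ) := Real.sqrt_pos.mpr hTpos
  calc Real.sqrt (d2 t) ≤ Real.sqrt (K/(T:ℝ)) := Real.sqrt_le_sqrt htle
    _ = Real.sqrt K / Real.sqrt (T:ℝ) := Real.sqrt_div hKpos.le _
    _ ≤ (Real.sqrt K + 1) / Real.sqrt (T:ℝ) := by
        apply div_le_div_of_nonneg_right ?_ hsT.le
        linarith
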